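/- For λ = 0.99, the unique critical parameter μ_h > 1 satisfying b(0.99, μ_h) = 1 lies in the open interval (4.5, 4.55) (equivalently, b(0.99, 4.5) < 1 < b(0.99, 4.55)); moreover, at μ = μ_h one has a(0.99, μ_h)² < 4, so that the Jacobian of Φ_{0.99,μ_h} at its interior fixed point p* has a pair of non-real complex conjugate eigenvalues of modulus exactly 1. -/

import Mathlib

noncomputable section

/-- The planar R-S flip-flop model map `Φ_{λ,μ}(x,y) = (1 − x(λ(1−x) + y), μy(x − y))`. -/
def Phi (l m : ℝ) (p : ℝ × ℝ) : ℝ × ℝ :=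
  (1 - p.1 * (l * (1 - p.1) + p.2), m * p.2 * (p.1 - p.2))

/-- `x*` coordinate of the interior fixed point. -/
def xstar (l m : ℝ) : ℝ :=
  ((m⁻¹ - l - 1) + Real.sqrt ((1 + l - m⁻¹) ^ 2 + 4 * (1 - l))) / (2 * (1 - l))

/-- `y*` coordinate of the interior fixed point. -/
def ystar (l m : ℝ) : ℝ := xstar l m - 1 / m

/-- `a(λ,μ)`, the trace of the Jacobian of Φ at p*. -/
def adef (l m : ℝ) : ℝ := (2 * l - m - 1) * xstar l m + (2 - l + m⁻¹)

/-- `b(λ,μ)`, the determinant of the Jacobian of Φ at p*. -/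
def bdef (l m : ℝ) : ℝ :=
  m * ((l * (4 * m⁻¹ - 1) - 2 * (1 + m⁻¹)) * xstar l m + 2 * (1 - m⁻¹ * (l - m⁻¹)))

/-- The Jacobian matrix of Φ_{λ,μ} at the interior fixed point p*. -/
def Jp (l m : ℝ) : Matrix (Fin 2) (Fin 2) ℝ :=
  !![l * (2 * xstar l m - 1) - ystar l m, -(xstar l m);
     m * ystar l m, m * (xstar l m - 2 * ystar l m)]

/-- Auxiliary quartic obtained from `b(0.99, 1/t) = 1` by clearing the square root. -/
def Ppoly (t : ℝ) : ℝ :=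
  99/625*t^4 - 12338/15625*t^3 + 8170199/6250000*t^2 - 9955249/12500000*t + 30001/250000

lemma root_P {m : ℝ} (hm : 1 < m) (hb : bdef 0.99 m = 1) : Ppoly m⁻¹ = 0 := by
  have hm0 : m ≠ 0 := by linarith
  set t : ℝ := m⁻¹ with htdef
  set s : ℝ := Real.sqrt ((1 + 0.99 - t) ^ 2 + 4 * (1 - 0.99)) with hsdef
  have hs2 : s ^ 2 = (1 + 0.99 - t) ^ 2 + 4 * (1 - 0.99) := by
    rw [hsdef]; exact Real.sq_sqrt (by positivity)
  have hmt : m * t = 1 := mul_inv_cancel₀ hm0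
  rw [bdef, xstar] at hb
  have hE : (0.99 * (4 * t - 1) - 2 * (1 + t)) * ((t - 0.99 - 1 + s) / (2 * (1 - 0.99)))
      + 2 * (1 - t * (0.99 - t)) = t := by
    linear_combination t * hb - ((0.99 * (4 * t - 1) - 2 * (1 + t)) *
      ((t - 0.99 - 1 + s) / (2 * (1 - 0.99))) + 2 * (1 - t * (0.99 - t))) * hmt
  have h1 : (1.96 * t - 2.99) * s = -2 * t^2 + 6.95 * t - 5.9901 := by
    linear_combination (2 * (1 - 0.99)) * hE
  rw [Ppoly]
  linear_combination (-(((1.96 * t - 2.99)) * s + (-2 * t^2 + 6.95 * t - 5.9901))) * h1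
    + (1.96 * t - 2.99)^2 * hs2

lemma Pneg {t : ℝ} (h1 : 1/4 ≤ t) (h2 : t ≤ 1) : Ppoly t < 0 := by
  rw [Ppoly]
  nlinarith [mul_nonneg (sub_nonneg.2 h1) (sub_nonneg.2 h2), sq_nonneg (t - 1/2),
    sq_nonneg (t - 1/4), sq_nonneg (t - 1), sq_nonneg ((t-1/4)*(t-1)),
    mul_nonneg (mul_nonneg (sub_nonneg.2 h1) (sub_nonneg.2 h2)) (sub_nonneg.2 h1),
    mul_nonneg (mul_nonneg (sub_nonneg.2 h1) (sub_nonneg.2 h2)) (sub_nonneg.2 h2)]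

lemma Pinj {t1 t2 : ℝ} (h10 : 0 < t1) (h11 : t1 < 1/4) (h20 : 0 < t2) (h21 : t2 < 1/4)
    (e1 : Ppoly t1 = 0) (e2 : Ppoly t2 = 0) : t1 = t2 := by
  have hG : 99/625*(t1^3 + t1^2*t2 + t1*t2^2 + t2^3)
      - 12338/15625*(t1^2 + t1*t2 + t2^2) + 8170199/6250000*(t1 + t2)
      - 9955249/12500000 < 0 := by
    nlinarith [mul_pos h10 h20, sq_nonneg (t1+t2), mul_pos (mul_pos h10 h10) h10,
      mul_pos (mul_pos h20 h20) h20]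
  have key : (t1 - t2) * (99/625*(t1^3 + t1^2*t2 + t1*t2^2 + t2^3)
      - 12338/15625*(t1^2 + t1*t2 + t2^2) + 8170199/6250000*(t1 + t2)
      - 9955249/12500000) = 0 := by
    rw [Ppoly] at e1 e2; linear_combination e1 - e2
  rcases mul_eq_zero.1 key with h | h
  · linarith
  · linarith

lemma blow : bdef 0.99 4.5 < 1 := by
  rw [bdef, xstar]
  have h45 : ((4.5:ℝ))⁻¹ = 2/9 := by norm_num
  rw [h45]
  set s : ℝ := Real.sqrt ((1 + 0.99 - 2/9) ^ 2 + 4 * (1 - 0.99)) with hsdef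
  clear_value s
  have hs0 : 0 ≤ s := hsdef ▸ Real.sqrt_nonneg _
  have hs2 : s ^ 2 = 2563681/810000 := by
    rw [hsdef, Real.sq_sqrt (by norm_num)]; norm_num
  have hlb : (177903:ℝ)/100000 < s := by nlinarith [hs2, hs0]
  norm_num
  linarith

lemma bhigh : 1 < bdef 0.99 4.55 := by
  rw [bdef, xstar]
  have h455 : ((4.55:ℝ))⁻¹ = 20/91 := by norm_num
  rw [h455]
  set s : ℝ := Real.sqrt ((1 + 0.99 - 20/91) ^ 2 + 4 * (1 - 0.99)) with hsdef
  clear_value s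
  have hs0 : 0 ≤ s := hsdef ▸ Real.sqrt_nonneg _
  have hs2 : s ^ 2 = 262812281/82810000 := by
    rw [hsdef, Real.sq_sqrt (by norm_num)]; norm_num
  have hub : s < 1781484/1000000 := by nlinarith [hs2, hs0]
  norm_num
  linarith

lemma bcont : ContinuousOn (fun m => bdef 0.99 m) (Set.Icc (4.5:ℝ) 4.55) := by
  have hne : ∀ x ∈ Set.Icc (4.5:ℝ) 4.55, x ≠ 0 := by
    intro x hx; have := hx.1; intro h; rw [h] at this; norm_num at this
  have hinv : ContinuousOn (fun m : ℝ => m⁻¹) (Set.Icc (4.5:ℝ) 4.55) :=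
    ContinuousOn.inv₀ continuousOn_id hne
  have hsq : ContinuousOn
      (fun m : ℝ => Real.sqrt ((1 + 0.99 - m⁻¹) ^ 2 + 4 * (1 - 0.99)))
      (Set.Icc (4.5:ℝ) 4.55) :=
    Real.continuous_sqrt.comp_continuousOn
      ((((continuousOn_const.sub hinv).pow 2).add continuousOn_const))
  have hx : ContinuousOn (fun m => xstar 0.99 m) (Set.Icc (4.5:ℝ) 4.55) := by
    unfold xstar
    exact (((hinv.sub continuousOn_const).sub continuousOn_const).add hsq).div_const _
  unfold bdef
  exact continuousOn_id.mul
    ((((continuousOn_const.mul ((continuousOn_const.mul hinv).sub continuousOn_const)).sub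
      (continuousOn_const.mul (continuousOn_const.add hinv))).mul hx).add
      (continuousOn_const.mul (continuousOn_const.sub
        (hinv.mul (continuousOn_const.sub hinv)))))

lemma abound {m : ℝ} (h1 : 4.5 < m) (h2 : m < 4.55) : (adef 0.99 m) ^ 2 < 4 := by
  have hm0 : (0:ℝ) < m := by linarith
  have himul : m * m⁻¹ = 1 := mul_inv_cancel₀ (ne_of_gt hm0)
  have hi0 : 0 < m⁻¹ := inv_pos.2 hm0
  have ht1 : m⁻¹ < 2/9 := by nlinarith
  have ht2 : 20/91 < m⁻¹ := by nlinarith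
  rw [adef, xstar]
  set t : ℝ := m⁻¹ with htdef
  set s : ℝ := Real.sqrt ((1 + 0.99 - t) ^ 2 + 4 * (1 - 0.99)) with hsdef
  clear_value s
  have hs0 : 0 ≤ s := hsdef ▸ Real.sqrt_nonneg _
  have hs2 : s ^ 2 = (1 + 0.99 - t) ^ 2 + 4 * (1 - 0.99) := by
    rw [hsdef]; exact Real.sq_sqrt (by positivity)
  have hs_lo : 1.779 < s := by nlinarith
  have hs_hi : s < 1.782 := by nlinarith
  have hx_lo : (0.438:ℝ) < (t - 0.99 - 1 + s) / (2 * (1 - 0.99)) := by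
    rw [lt_div_iff₀ (by norm_num)]; norm_num; linarith
  have hx_hi : (t - 0.99 - 1 + s) / (2 * (1 - 0.99)) < 0.712 := by
    rw [div_lt_iff₀ (by norm_num)]; norm_num; linarith
  set x : ℝ := (t - 0.99 - 1 + s) / (2 * (1 - 0.99))
  have ha_hi : (2 * 0.99 - m - 1) * x + (2 - 0.99 + t) < 0 := by nlinarith
  have ha_lo : (-2:ℝ) < (2 * 0.99 - m - 1) * x + (2 - 0.99 + t) := by nlinarith
  nlinarith

/-- fixed point quadratic identity for `x*` -/
lemma xquad (m : ℝ) :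
    (1 - 0.99) * (xstar 0.99 m) ^ 2 + (1 + 0.99 - m⁻¹) * (xstar 0.99 m) - 1 = 0 := by
  rw [xstar]
  have hs2 : (Real.sqrt ((1 + 0.99 - m⁻¹) ^ 2 + 4 * (1 - 0.99))) ^ 2
      = (1 + 0.99 - m⁻¹) ^ 2 + 4 * (1 - 0.99) := Real.sq_sqrt (by positivity)
  linear_combination (1/(4*(1-0.99))) * hs2

/-- For λ = 0.99: the unique μ_h > 1 with b(0.99,μ_h) = 1 lies in (4.5, 4.55)
(equivalently b(0.99,4.5) < 1 < b(0.99,4.55)); moreover a(0.99,μ_h)² < 4, so the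
Jacobian at p* has a pair of non-real complex conjugate eigenvalues of modulus 1. -/
theorem stmt_16 :
    ∃ μh : ℝ, 1 < μh ∧ bdef 0.99 μh = 1 ∧
      (∀ μ' : ℝ, 1 < μ' → bdef 0.99 μ' = 1 → μ' = μh) ∧
      4.5 < μh ∧ μh < 4.55 ∧
      bdef 0.99 4.5 < 1 ∧ 1 < bdef 0.99 4.55 ∧
      (adef 0.99 μh) ^ 2 < 4 ∧
      (((adef 0.99 μh : ℂ) + Complex.I * Real.sqrt (4 - (adef 0.99 μh) ^ 2)) / 2).im
        ≠ 0 ∧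
      norm
          (((adef 0.99 μh : ℂ) + Complex.I * Real.sqrt (4 - (adef 0.99 μh) ^ 2)) / 2)
        = 1 ∧
      (∀ σ : ℂ,
        (σ = ((adef 0.99 μh : ℂ) + Complex.I * Real.sqrt (4 - (adef 0.99 μh) ^ 2)) / 2 ∨
          σ = ((adef 0.99 μh : ℂ) - Complex.I * Real.sqrt (4 - (adef 0.99 μh) ^ 2)) / 2)
        → Matrix.det (σ • (1 : Matrix (Fin 2) (Fin 2) ℂ)
            - (Jp 0.99 μh).map (Complex.ofReal)) = 0) := by
  -- existence via the intermediate value theorem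
  have hblow := blow
  have hbhigh := bhigh
  obtain ⟨μh, hmem, heq⟩ :=
    intermediate_value_Icc (by norm_num : (4.5:ℝ) ≤ 4.55) bcont
      (⟨le_of_lt hblow, le_of_lt hbhigh⟩ : (1:ℝ) ∈ Set.Icc (bdef 0.99 4.5) (bdef 0.99 4.55))
  simp only at heq
  have h45 : 4.5 < μh := by
    rcases lt_or_eq_of_le hmem.1 with h | h
    · exact h
    · exfalso; rw [← h] at heq; rw [heq] at hblow; exact lt_irrefl _ hblow
  have h455 : μh < 4.55 := by
    rcases lt_or_eq_of_le hmem.2 with h | h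
    · exact h
    · exfalso; rw [h] at heq; rw [heq] at hbhigh; exact lt_irrefl _ hbhigh
  have hm1 : (1:ℝ) < μh := by linarith
  have hm0 : μh ≠ 0 := by intro h; rw [h] at hm1; norm_num at hm1
  -- uniqueness
  have huniq : ∀ μ' : ℝ, 1 < μ' → bdef 0.99 μ' = 1 → μ' = μh := by
    intro μ' hμ'1 hbμ'
    have hμ'0 : (0:ℝ) < μ' := by linarith
    have hP' : Ppoly μ'⁻¹ = 0 := root_P hμ'1 hbμ'
    have hPh : Ppoly μh⁻¹ = 0 := root_P hm1 heq
    have ht'0 : 0 < μ'⁻¹ := inv_pos.2 hμ'0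
    have ht'1 : μ'⁻¹ < 1 := by
      rw [inv_lt_one_iff₀]; right; exact hμ'1
    have ht'q : μ'⁻¹ < 1/4 := by
      by_contra h
      push_neg at h
      exact absurd hP' (ne_of_lt (Pneg h (le_of_lt ht'1)))
    have hth0 : 0 < μh⁻¹ := inv_pos.2 (by linarith : (0:ℝ) < μh)
    have hthq : μh⁻¹ < 1/4 := by
      have : (4:ℝ) < μh := by linarith
      have h4 : (0:ℝ) < 4 := by norm_num
      calc μh⁻¹ < 4⁻¹ := by
            apply inv_strictAnti₀ h4 this
        _ = 1/4 := by norm_num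
    have := Pinj ht'0 ht'q hth0 hthq hP' hPh
    exact inv_injective this
  -- a² < 4
  have ha2 : (adef 0.99 μh) ^ 2 < 4 := abound h45 h455
  -- complex eigenvalue facts
  set a : ℝ := adef 0.99 μh with hadef
  set r : ℝ := Real.sqrt (4 - a ^ 2) with hrdef
  have hr0 : 0 ≤ r := hrdef ▸ Real.sqrt_nonneg _
  have hr2 : r ^ 2 = 4 - a ^ 2 := by rw [hrdef]; exact Real.sq_sqrt (by linarith)
  have hrpos : 0 < r := by nlinarith
  refine ⟨μh, hm1, heq, huniq, h45, h455, blow, bhigh, ha2, ?_, ?_, ?_⟩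
  · have him : (((a : ℂ) + Complex.I * (r:ℂ)) / 2).im = r / 2 := by
      simp [Complex.div_im]
    rw [him]
    positivity
  · rw [Complex.norm_def]
    have hnorm : Complex.normSq (((a : ℂ) + Complex.I * (r:ℂ)) / 2) = 1 := by
      simp [Complex.normSq_apply, Complex.div_re, Complex.div_im]
      nlinarith
    rw [hnorm, Real.sqrt_one]
  · intro σ hσ
    have hkey := xquad μh
    have hkeyC := congrArg (Complex.ofReal) hkey
    have hbC := congrArg (Complex.ofReal) heq
    have haC := congrArg (Complex.ofReal) (hadef)
    have hr2C := congrArg (Complex.ofReal) hr2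
    rw [bdef] at hbC
    rw [adef] at haC
    push_cast at hkeyC hbC haC hr2C
    have hI : (Complex.I) ^ 2 = -1 := Complex.I_sq
    have hmC : (μh:ℂ) * (μh:ℂ)⁻¹ = 1 := by
      apply mul_inv_cancel₀; exact_mod_cast hm0
    rcases hσ with h | h <;> subst h <;>
      simp [Matrix.det_fin_two, Jp, Matrix.map_apply, Matrix.smul_apply,
        Matrix.one_apply, ystar]
    · linear_combination hbC + 2 * (μh:ℂ) * hkeyC - (1/4) * hr2C
        + (((a:ℝ):ℂ) + Complex.I * ((r:ℝ):ℂ)) / 2 * haC + ((r:ℂ)^2/4) * hI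
        - (((a:ℝ):ℂ) + Complex.I * ((r:ℝ):ℂ)) * hmC
    · linear_combination hbC + 2 * (μh:ℂ) * hkeyC - (1/4) * hr2C
        + (((a:ℝ):ℂ) - Complex.I * ((r:ℝ):ℂ)) / 2 * haC + ((r:ℂ)^2/4) * hI
        - (((a:ℝ):ℂ) - Complex.I * ((r:ℝ):ℂ)) * hmC
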